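/- Let x* ∈ Δ be a stationary point of min_{x∈Δ} f(x) with KKT multipliers (λ*, μ*) at which strict complementarity holds (μ*_i > 0 for every i with x*_i = 0), and let {x^k} ⊆ Δ be any sequence converging to x*. Then there exists k̄ such that for all k ≥ k̄ the active-set estimate satisfies A(x^k) = {i : x*_i = 0} and N(x^k) = {i : x*_i > 0}. -/

import Mathlib

open scoped BigOperators Topology

noncomputable section

/-- The unit simplex in `ℝⁿ`. -/
def unitSimplex (n : ℕ) : Set (EuclideanSpace ℝ (Fin n)) :=
  {x | (∑ i, x i) = 1 ∧ ∀ i, 0 ≤ x i}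

/-- The active-set estimate `A(x) = {i : xᵢ ≤ ε ∇f(x)ᵀ(eᵢ - x)}` (parameter `ε > 0`). -/
def activeEstimate {n : ℕ} (f : EuclideanSpace ℝ (Fin n) → ℝ) (eps : ℝ)
    (x : EuclideanSpace ℝ (Fin n)) : Set (Fin n) :=
  {i | x i ≤ eps * ∑ j, gradient f x j * (EuclideanSpace.single i (1 : ℝ) j - x j)}

/-- The nonactive-set estimate `N(x) = {i : xᵢ > ε ∇f(x)ᵀ(eᵢ - x)}`. -/
def nonactiveEstimate {n : ℕ} (f : EuclideanSpace ℝ (Fin n) → ℝ) (eps : ℝ)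
    (x : EuclideanSpace ℝ (Fin n)) : Set (Fin n) :=
  {i | eps * ∑ j, gradient f x j * (EuclideanSpace.single i (1 : ℝ) j - x j) < x i}

/-- If strict complementarity holds at a stationary point `x*` and `xᵏ → x*` within the
simplex, then eventually `A(xᵏ) = {i : x*ᵢ = 0}` and `N(xᵏ) = {i : x*ᵢ > 0}`. -/
theorem active_set_identification_along_sequence (n : ℕ)
    (f : EuclideanSpace ℝ (Fin n) → ℝ) (hf : ContDiff ℝ 1 f)
    (eps : ℝ) (heps : 0 < eps)
    (xstar : EuclideanSpace ℝ (Fin n)) (hxstar : xstar ∈ unitSimplex n)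
    (lam : ℝ) (mu : Fin n → ℝ)
    (hkkt : (∀ i, gradient f xstar i - lam - mu i = 0) ∧
      (∑ i, mu i * xstar i) = 0 ∧ (∀ i, 0 ≤ mu i))
    (hstrict : ∀ i, xstar i = 0 → 0 < mu i)
    (x : ℕ → EuclideanSpace ℝ (Fin n)) (hxk : ∀ k, x k ∈ unitSimplex n)
    (hconv : Filter.Tendsto x Filter.atTop (𝓝 xstar)) :
    ∃ kbar : ℕ, ∀ k ≥ kbar,
      activeEstimate f eps (x k) = {i | xstar i = 0} ∧
      nonactiveEstimate f eps (x k) = {i | 0 < xstar i} := by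
  obtain ⟨hg, hcomp, hmu⟩ := hkkt
  have hgrad_cont : Continuous (fun y => gradient f y) := by
    have h1 : Continuous (fun y => fderiv ℝ f y) := hf.continuous_fderiv one_ne_zero
    exact (InnerProductSpace.toDual ℝ _).symm.continuous.comp h1
  set F : Fin n → EuclideanSpace ℝ (Fin n) → ℝ :=
    fun i y => eps * ∑ j, gradient f y j * (EuclideanSpace.single i (1:ℝ) j - y j) with hF
  have hFcont : ∀ i, Continuous (F i) := by
    intro i
    apply continuous_const.mul
    apply continuous_finset_sum
    intro j _
    exact ((EuclideanSpace.proj j).continuous.comp hgrad_cont).mul (continuous_const.sub (EuclideanSpace.proj j).continuous)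
  have hsum_star : ∀ i, F i xstar = eps * mu i := by
    intro i
    have hgj : ∀ j, gradient f xstar j = lam + mu j := by
      intro j; have := hg j; linarith
    have h1 : (∑ j, gradient f xstar j * (EuclideanSpace.single i (1:ℝ) j - xstar j))
        = (∑ j, (lam + mu j) * EuclideanSpace.single i (1:ℝ) j)
          - ∑ j, (lam + mu j) * xstar j := by
      rw [← Finset.sum_sub_distrib]
      exact Finset.sum_congr rfl fun j _ => by rw [hgj j]; ring
    have h2 : (∑ j, (lam + mu j) * EuclideanSpace.single i (1:ℝ) j) = lam + mu i := by
      simp [EuclideanSpace.single_apply, mul_ite, Finset.sum_ite_eq']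
    have h3 : (∑ j, (lam + mu j) * xstar j) = lam := by
      have : (∑ j, (lam + mu j) * xstar j) = lam * (∑ j, xstar j) + ∑ j, mu j * xstar j := by
        rw [Finset.mul_sum, ← Finset.sum_add_distrib]
        exact Finset.sum_congr rfl fun j _ => by ring
      rw [this, hxstar.1, hcomp]; ring
    simp only [hF]
    rw [h1, h2, h3]; ring
  have hcoord : ∀ i, Filter.Tendsto (fun k => (x k) i) Filter.atTop (𝓝 (xstar i)) :=
    fun i => ((EuclideanSpace.proj i).continuous.tendsto xstar).comp hconv
  have hFtend : ∀ i, Filter.Tendsto (fun k => F i (x k)) Filter.atTop (𝓝 (eps * mu i)) := by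
    intro i
    have := ((hFcont i).tendsto xstar).comp hconv
    rwa [hsum_star i] at this
  have key : ∀ i, ∀ᶠ k in Filter.atTop,
      (((x k) i ≤ F i (x k)) ↔ xstar i = 0) ∧ ((F i (x k) < (x k) i) ↔ 0 < xstar i) := by
    intro i
    rcases (hxstar.2 i).eq_or_lt with hx0 | hxpos
    · have hx0 : xstar i = 0 := hx0.symm
      have hmui : 0 < mu i := hstrict i hx0
      have hlt : xstar i < eps * mu i := by rw [hx0]; positivity
      filter_upwards [(hcoord i).eventually_lt (hFtend i) hlt] with k hk
      exact ⟨iff_of_true hk.le hx0,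
        iff_of_false (not_lt.2 hk.le) (by rw [hx0]; exact lt_irrefl 0)⟩
    · have hmui : mu i = 0 := by
        have hsum := hcomp
        have hnn : ∀ j ∈ Finset.univ, 0 ≤ mu j * xstar j :=
          fun j _ => mul_nonneg (hmu j) (hxstar.2 j)
        have := (Finset.sum_eq_zero_iff_of_nonneg hnn).1 hsum i (Finset.mem_univ i)
        exact (mul_eq_zero.1 this).resolve_right hxpos.ne'
      have hlt : eps * mu i < xstar i := by rw [hmui, mul_zero]; exact hxpos
      filter_upwards [(hFtend i).eventually_lt (hcoord i) hlt] with k hk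
      exact ⟨iff_of_false (not_le.2 hk) hxpos.ne', iff_of_true hk hxpos⟩
  have hall : ∀ᶠ k in Filter.atTop, ∀ i,
      (((x k) i ≤ F i (x k)) ↔ xstar i = 0) ∧ ((F i (x k) < (x k) i) ↔ 0 < xstar i) :=
    Filter.eventually_all.2 key
  obtain ⟨kbar, hkbar⟩ := Filter.eventually_atTop.1 hall
  refine ⟨kbar, fun k hk => ?_⟩
  constructor
  · ext i
    exact (hkbar k hk i).1
  · ext i
    exact (hkbar k hk i).2
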